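/- arXiv:0802.0261 — 2 statements merged into one kernel-verified Lean document; each statement's English description precedes it below -/
import Mathlib

section
/- For every ρ > 0 and every real x ≤ 0 with x ≠ −sinh ρ, setting u = −U_ρ(−x) = −((−x)·sinh ρ + 1)/(x + sinh ρ), one has u ≠ x, and the geodesic γ(x, u) with ideal endpoints x and u is tangent to the hyperbolic disc B_ρ(i); that is, inf_{z ∈ γ(x,u)} dist(z, i) = ρ. -/
open UpperHalfPlane MeasureTheory

/-- The complete hyperbolic geodesic of the upper half-plane with ideal endpoints `a` and `b`:
the Euclidean semicircle `{z ∈ ℍ : |z − (a+b)/2| = |a−b|/2}`. -/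
noncomputable def geodesic (a b : ℝ) : Set ℍ :=
  {z : ℍ | ‖(z : ℂ) - (((a + b) / 2 : ℝ) : ℂ)‖ = |a - b| / 2}

/-- The geodesic `γ(a,b)` is tangent to the hyperbolic disc `B_ρ(i)`:
the infimum of the hyperbolic distance from points of the geodesic to `i` equals `ρ`. -/
def TangentToDisc (a b ρ : ℝ) : Prop :=
  sInf ((fun z : ℍ => dist z UpperHalfPlane.I) '' geodesic a b) = ρ

/-- The geodesic `γ(a,b)` intersects the closed hyperbolic disc `B̄_r(i)`. -/
def MeetsClosedDisc (a b r : ℝ) : Prop :=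
  ∃ z ∈ geodesic a b, dist z UpperHalfPlane.I ≤ r

lemma mem_geodesic_iff (a b : ℝ) (z : ℍ) :
    z ∈ geodesic a b ↔ ((z:ℂ).re - (a+b)/2)^2 + (z:ℂ).im^2 = ((a-b)/2)^2 := by
  simp only [geodesic, Set.mem_setOf_eq, Complex.norm_def, Complex.normSq_apply,
    Complex.sub_re, Complex.sub_im, Complex.ofReal_re, Complex.ofReal_im, sub_zero]
  rw [show ((z:ℂ).re - (a+b)/2) * ((z:ℂ).re - (a+b)/2) + (z:ℂ).im * (z:ℂ).im
      = ((z:ℂ).re - (a+b)/2)^2 + (z:ℂ).im^2 by ring]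
  constructor
  · intro h
    have h2 : (0:ℝ) ≤ ((z:ℂ).re - (a+b)/2)^2 + (z:ℂ).im^2 := by positivity
    have h3 := Real.sq_sqrt h2
    rw [h, div_pow, sq_abs] at h3
    linarith
  · intro h
    rw [h, show ((a-b)/2)^2 = ((a-b)/2)*((a-b)/2) by ring, Real.sqrt_mul_self_eq_abs,
      abs_div, abs_two]

lemma cosh_dist_I (z : ℍ) :
    Real.cosh (dist z UpperHalfPlane.I) = ((z:ℂ).re^2 + (z:ℂ).im^2 + 1) / (2 * (z:ℂ).im) := by
  have hz : (0:ℝ) < (z:ℂ).im := z.2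
  rw [UpperHalfPlane.cosh_dist, Complex.dist_eq, Complex.sq_norm, Complex.normSq_apply]
  simp only [Complex.sub_re, Complex.sub_im, UpperHalfPlane.coe_I, Complex.I_re, Complex.I_im,
    UpperHalfPlane.im, UpperHalfPlane.I_im]
  field_simp
  ring

lemma dist_eq_of_cosh_eq (d ρ : ℝ) (hd : 0 ≤ d) (hρ : 0 ≤ ρ)
    (h : Real.cosh d = Real.cosh ρ) : d = ρ := by
  have h1 := Real.cosh_le_cosh.mp h.le
  have h2 := Real.cosh_le_cosh.mp h.ge
  rw [abs_of_nonneg hd, abs_of_nonneg hρ] at *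
  linarith

lemma key_lb (c R p q C : ℝ) (hq : 0 < q) (hC : 0 < C)
    (hM : (c^2+R^2+1)^2 = 4*R^2*(C^2+c^2))
    (h : (p - c)^2 + q^2 = R^2) :
    2*C*q ≤ p^2 + q^2 + 1 := by
  have hR2 : 0 < R^2 := by nlinarith [sq_nonneg (p - c)]
  have hkey : R^2*((p^2+q^2+1)^2 - (2*C*q)^2)
      = ((c^2+R^2+1)*(p-c) + 2*c*R^2)^2 := by
    linear_combination (R^2 - (p-c)^2) * hM +
      R^2*(2*(c^2+R^2+1) + 4*c*(p-c) + ((p-c)^2+q^2-R^2) - 4*C^2) * h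
  have h1 : 0 ≤ (p^2+q^2+1)^2 - (2*C*q)^2 := by
    nlinarith [sq_nonneg ((c^2+R^2+1)*(p-c) + 2*c*R^2)]
  nlinarith [mul_pos hC hq]

/-- General tangency criterion. -/
lemma tangent_of_identity (a b ρ : ℝ) (hρ : 0 < ρ) (hab : a ≠ b)
    (hM : (((a+b)/2)^2 + ((a-b)/2)^2 + 1)^2
        = 4*((a-b)/2)^2*((Real.cosh ρ)^2 + ((a+b)/2)^2)) :
    TangentToDisc a b ρ := by
  obtain ⟨C, hC_def⟩ : ∃ C, C = Real.cosh ρ := ⟨_, rfl⟩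
  obtain ⟨c, hc_def⟩ : ∃ c, c = (a+b)/2 := ⟨_, rfl⟩
  obtain ⟨R, hR_def⟩ : ∃ R, R = (a-b)/2 := ⟨_, rfl⟩
  have hC : 0 < C := hC_def ▸ Real.cosh_pos ρ
  rw [← hC_def, ← hc_def, ← hR_def] at hM
  have hRne : R ≠ 0 := by
    rw [hR_def]; exact div_ne_zero (sub_ne_zero.mpr hab) two_ne_zero
  have hR2 : 0 < R^2 := lt_of_le_of_ne (sq_nonneg R) (Ne.symm (pow_ne_zero 2 hRne))
  obtain ⟨M, hM_def⟩ : ∃ M, M = c^2+R^2+1 := ⟨_, rfl⟩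
  rw [← hM_def] at hM
  have hMpos : 0 < M := by rw [hM_def]; positivity
  have hMne : M ≠ 0 := ne_of_gt hMpos
  obtain ⟨q0, hq0_def⟩ : ∃ q0, q0 = 2*C*R^2/M := ⟨_, rfl⟩
  have hq0 : 0 < q0 := by rw [hq0_def]; positivity
  obtain ⟨p0, hp0_def⟩ : ∃ p0, p0 = c - 2*c*R^2/M := ⟨_, rfl⟩
  set z0 : ℍ := ⟨⟨p0, q0⟩, hq0⟩ with hz0_def
  have hz0re : (z0:ℂ).re = p0 := rfl
  have hz0im : (z0:ℂ).im = q0 := rfl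
  have hcirc : (p0 - c)^2 + q0^2 = R^2 := by
    rw [hp0_def, hq0_def]
    field_simp
    linear_combination (-R^2) * hM
  have hmem0 : z0 ∈ geodesic a b := by
    rw [mem_geodesic_iff, hz0re, hz0im, ← hc_def, ← hR_def]; exact hcirc
  have hdist0 : dist z0 UpperHalfPlane.I = ρ := by
    apply dist_eq_of_cosh_eq _ _ dist_nonneg hρ.le
    rw [cosh_dist_I, hz0re, hz0im, ← hC_def]
    rw [hp0_def, hq0_def]
    field_simp
    linear_combination (M - R^2) * hM - M^2 * hM_def
  have lb : ∀ z ∈ geodesic a b, ρ ≤ dist z UpperHalfPlane.I := by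
    intro z hz
    have hcon := (mem_geodesic_iff a b z).mp hz
    rw [← hc_def, ← hR_def] at hcon
    have hqz : 0 < (z:ℂ).im := z.2
    have hkey := key_lb c R (z:ℂ).re (z:ℂ).im C hqz hC (hM_def ▸ hM) hcon
    have hcosh : C ≤ Real.cosh (dist z UpperHalfPlane.I) := by
      rw [cosh_dist_I, le_div_iff₀ (by positivity)]
      nlinarith
    have h2 := Real.cosh_le_cosh.mp (hC_def ▸ hcosh)
    rwa [abs_of_nonneg hρ.le, abs_of_nonneg dist_nonneg] at h2
  apply le_antisymm
  · exact csInf_le ⟨ρ, fun y hy => by obtain ⟨z, hz, rfl⟩ := hy; exact lb z hz⟩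
      ⟨z0, hmem0, hdist0⟩
  · exact le_csInf ⟨ρ, z0, hmem0, hdist0⟩
      (fun y hy => by obtain ⟨z, hz, rfl⟩ := hy; exact lb z hz)

/-- For every ρ > 0 and every real x ≤ 0 with x ≠ −sinh ρ, setting
u = −U_ρ(−x) = −((−x)·sinh ρ + 1)/(x + sinh ρ), one has u ≠ x, and the geodesic
γ(x, u) is tangent to the hyperbolic disc B_ρ(i). -/
theorem tangent_U_neg (ρ : ℝ) (hρ : 0 < ρ) (x : ℝ) (hx : x ≤ 0) (hxρ : x ≠ -Real.sinh ρ) :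
    -((-x * Real.sinh ρ + 1) / (x + Real.sinh ρ)) ≠ x ∧
      TangentToDisc x (-((-x * Real.sinh ρ + 1) / (x + Real.sinh ρ))) ρ := by
  have hs : 0 < Real.sinh ρ := Real.sinh_pos_iff.mpr hρ
  set s := Real.sinh ρ with hs_def
  have hxs : x + s ≠ 0 := fun h => hxρ (by linarith)
  obtain ⟨u, hu_def⟩ : ∃ u, u = -((-x * s + 1) / (x + s)) := ⟨_, rfl⟩
  rw [← hu_def]
  have hu : u = (x*s - 1)/(x+s) := by rw [hu_def]; field_simp; ring
  have hxu : x - u = (x^2+1)/(x+s) := by rw [hu]; field_simp; ring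
  have hxune : x - u ≠ 0 := by rw [hxu]; exact div_ne_zero (by positivity) hxs
  have hne : u ≠ x := fun h => hxune (by rw [h]; ring)
  refine ⟨hne, ?_⟩
  apply tangent_of_identity _ _ _ hρ (Ne.symm hne)
  have hC2 : (Real.cosh ρ)^2 = 1 + s^2 := by rw [Real.cosh_sq, hs_def]; ring
  rw [hC2, hu]
  field_simp
  ring
end

section
/- For every r > 0, every real x with −sinh r < x ≤ 0, and every real y with y ≠ x, the geodesic γ(x,y) with ideal endpoints x and y intersects the closed hyperbolic disc B̄_r(i) if and only if y ≥ −W_r(−x) or y ≤ −U_r(−x). -/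
open UpperHalfPlane MeasureTheory

lemma dist_I_le_iff (z : ℍ) (r : ℝ) (hr : 0 ≤ r) :
    dist z I ≤ r ↔ 1 + ‖(z : ℂ) - Complex.I‖ ^ 2 / (2 * z.im) ≤ Real.cosh r := by
  have hc : Real.cosh (dist z I) = 1 + ‖(z : ℂ) - Complex.I‖ ^ 2 / (2 * z.im) := by
    rw [UpperHalfPlane.cosh_dist, I_im, Complex.dist_eq, coe_I, mul_one]
  constructor
  · intro h
    rw [← hc]
    exact Real.cosh_le_cosh.2 (by rwa [abs_of_nonneg dist_nonneg, abs_of_nonneg hr])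
  · intro h
    rw [← hc] at h
    have := Real.cosh_le_cosh.1 h
    rwa [abs_of_nonneg dist_nonneg, abs_of_nonneg hr] at this

lemma meets_iff_quad (r : ℝ) (hr : 0 < r) (x y : ℝ) (hy : y ≠ x) :
    MeetsClosedDisc x y r ↔
      (x ^ 2 + 1) * (y ^ 2 + 1) ≤ Real.cosh r ^ 2 * (x - y) ^ 2 := by
  have hK : 1 ≤ Real.cosh r := Real.one_le_cosh r
  set K := Real.cosh r with hKdef
  constructor
  · rintro ⟨z, hmem, hle⟩
    set p := (z : ℂ).re with hp
    set q := (z : ℂ).im with hq0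
    have hq : 0 < q := z.2
    rw [dist_I_le_iff z r hr.le] at hle
    have hmem2 : (p - (x + y) / 2) ^ 2 + q ^ 2 = (x - y) ^ 2 / 4 := by
      have h2 := congrArg (· ^ 2) hmem
      simp only [geodesic, Set.mem_setOf_eq] at hmem
      have h3 : ‖(z : ℂ) - (((x + y) / 2 : ℝ) : ℂ)‖ ^ 2 = (|x - y| / 2) ^ 2 := by
        rw [hmem]
      rw [Complex.sq_norm, Complex.normSq_apply] at h3
      simp only [Complex.sub_re, Complex.sub_im, Complex.ofReal_re, Complex.ofReal_im,
        sub_zero, div_pow, sq_abs] at h3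
      rw [← hp, ← hq0] at h3
      nlinarith [h3]
    have habs : ‖(z : ℂ) - Complex.I‖ ^ 2 = p ^ 2 + (q - 1) ^ 2 := by
      rw [Complex.sq_norm, Complex.normSq_apply]
      simp only [Complex.sub_re, Complex.sub_im, Complex.I_re, Complex.I_im, sub_zero]
      rw [← hp, ← hq0]; ring
    have him : z.im = q := rfl
    rw [him, habs] at hle
    have h2q : (0 : ℝ) < 2 * q := by linarith
    have hle2 : p ^ 2 + q ^ 2 + 1 ≤ 2 * q * K := by
      have := (div_le_iff₀ h2q).1 (by linarith : (p ^ 2 + (q - 1) ^ 2) / (2 * q) ≤ K - 1)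
      nlinarith [this]
    have keyeq : ((x - y) ^ 2 / 4) * (p ^ 2 + q ^ 2 + 1) ^ 2
        - q ^ 2 * ((x ^ 2 + 1) * (y ^ 2 + 1))
        = (((x ^ 2 + y ^ 2) / 2 + 1) * (p - (x + y) / 2)
            + (x + y) / 2 * ((x - y) ^ 2 / 4) * 2) ^ 2 := by
      linear_combination (2 * ((x - y) ^ 2 / 4) * (p ^ 2 + q ^ 2 + 1)
        - ((x - y) ^ 2 / 4) * ((p - (x + y) / 2) ^ 2 + q ^ 2 - (x - y) ^ 2 / 4)
        - (x ^ 2 + 1) * (y ^ 2 + 1)) * hmem2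
    have h1 : (p ^ 2 + q ^ 2 + 1) ^ 2 ≤ (2 * q * K) ^ 2 := by
      have hpos : (0 : ℝ) ≤ p ^ 2 + q ^ 2 + 1 := by positivity
      exact pow_le_pow_left₀ hpos hle2 2
    have hq2 : (0 : ℝ) < q ^ 2 := by positivity
    have step1 : q ^ 2 * ((x ^ 2 + 1) * (y ^ 2 + 1))
        ≤ ((x - y) ^ 2 / 4) * (p ^ 2 + q ^ 2 + 1) ^ 2 := by
      have hsq := sq_nonneg (((x ^ 2 + y ^ 2) / 2 + 1) * (p - (x + y) / 2)
        + (x + y) / 2 * ((x - y) ^ 2 / 4) * 2)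
      linarith [keyeq]
    have step2 : ((x - y) ^ 2 / 4) * (p ^ 2 + q ^ 2 + 1) ^ 2
        ≤ ((x - y) ^ 2 / 4) * (2 * q * K) ^ 2 :=
      mul_le_mul_of_nonneg_left h1 (by positivity)
    have step3 : ((x - y) ^ 2 / 4) * (2 * q * K) ^ 2 = q ^ 2 * (K ^ 2 * (x - y) ^ 2) := by
      ring
    have hfin : q ^ 2 * ((x ^ 2 + 1) * (y ^ 2 + 1)) ≤ q ^ 2 * (K ^ 2 * (x - y) ^ 2) := by
      linarith
    exact le_of_mul_le_mul_left hfin hq2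
  · intro h
    have hxy : x - y ≠ 0 := sub_ne_zero.2 (Ne.symm hy)
    have hK0 : (0 : ℝ) < K := lt_of_lt_of_le one_pos hK
    obtain ⟨A, hAdef⟩ : ∃ A : ℝ, A = (x ^ 2 + y ^ 2) / 2 + 1 := ⟨_, rfl⟩
    have hA : 0 < A := by rw [hAdef]; positivity
    have hA' : A ≠ 0 := ne_of_gt hA
    obtain ⟨S, hS, hS2, hSle⟩ : ∃ S : ℝ, 0 < S ∧ S ^ 2 = (x ^ 2 + 1) * (y ^ 2 + 1) ∧
        S ≤ |x - y| * K := by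
      refine ⟨Real.sqrt ((x ^ 2 + 1) * (y ^ 2 + 1)), Real.sqrt_pos.2 (by positivity),
        Real.sq_sqrt (by positivity), ?_⟩
      have h1 : Real.sqrt ((x ^ 2 + 1) * (y ^ 2 + 1)) ≤ Real.sqrt ((|x - y| * K) ^ 2) :=
        Real.sqrt_le_sqrt (by rw [mul_pow, sq_abs]; nlinarith [h])
      rwa [Real.sqrt_sq (by positivity)] at h1
    obtain ⟨q, hqdef⟩ : ∃ q : ℝ, q = |x - y| / 2 * S / A := ⟨_, rfl⟩
    have hq : 0 < q := by
      rw [hqdef]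
      apply div_pos (mul_pos _ hS) hA
      simpa using abs_pos.2 hxy
    obtain ⟨d, hddef⟩ : ∃ d : ℝ, d = -(x + y) * ((x - y) ^ 2 / 4) / A := ⟨_, rfl⟩
    obtain ⟨p, hpdef⟩ : ∃ p : ℝ, p = d + (x + y) / 2 := ⟨_, rfl⟩
    have hdA : d * A = -(x + y) * ((x - y) ^ 2 / 4) := by
      rw [hddef, div_mul_cancel₀ _ hA']
    have hqA : q * A = |x - y| / 2 * S := by
      rw [hqdef, div_mul_cancel₀ _ hA']
    have hdq : d ^ 2 + q ^ 2 = (x - y) ^ 2 / 4 := by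
      have key2 : (d ^ 2 + q ^ 2) * A ^ 2 = ((x - y) ^ 2 / 4) * A ^ 2 := by
        have e1 : (d ^ 2 + q ^ 2) * A ^ 2 = (d * A) ^ 2 + (q * A) ^ 2 := by ring
        rw [e1, hdA, hqA, mul_pow, mul_pow, div_pow, div_pow, sq_abs, hS2, hAdef]
        ring
      exact mul_right_cancel₀ (pow_ne_zero 2 hA') key2
    have e3 : (p ^ 2 + q ^ 2 + 1) * A = S ^ 2 := by
      have hpe : p ^ 2 + q ^ 2 + 1
          = (x - y) ^ 2 / 4 + (x + y) * d + (x + y) ^ 2 / 4 + 1 := by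
        rw [hpdef]; linear_combination hdq
      have e3' : (p ^ 2 + q ^ 2 + 1) * A
          = ((x - y) ^ 2 / 4 + (x + y) ^ 2 / 4 + 1) * A + (x + y) * (d * A) := by
        rw [hpe]; ring
      rw [e3', hdA, hAdef, hS2]; ring
    have e4 : (2 * q * K) * A = |x - y| * K * S := by
      have : (2 * q * K) * A = 2 * K * (q * A) := by ring
      rw [this, hqA]; ring
    have hfin : p ^ 2 + q ^ 2 + 1 ≤ 2 * q * K := by
      have h5 : (p ^ 2 + q ^ 2 + 1) * A ≤ (2 * q * K) * A := by
        rw [e3, e4]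
        calc S ^ 2 = S * S := sq S
          _ ≤ |x - y| * K * S := mul_le_mul_of_nonneg_right hSle hS.le
      exact le_of_mul_le_mul_right h5 hA
    refine ⟨UpperHalfPlane.mk ⟨p, q⟩ hq, ?_, ?_⟩
    · show ‖(⟨p, q⟩ : ℂ) - (((x + y) / 2 : ℝ) : ℂ)‖ = |x - y| / 2
      rw [Complex.norm_def]
      have hnsq : Complex.normSq ((⟨p, q⟩ : ℂ) - (((x + y) / 2 : ℝ) : ℂ))
          = (|x - y| / 2) ^ 2 := by
        simp only [Complex.normSq_apply, Complex.sub_re, Complex.sub_im, Complex.ofReal_re,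
          Complex.ofReal_im, sub_zero, UpperHalfPlane.coe_mk]
        show (p - (x + y) / 2) * (p - (x + y) / 2) + q * q = _
        rw [hpdef, div_pow, sq_abs]
        linear_combination hdq
      rw [hnsq, Real.sqrt_sq (by positivity)]
    · rw [dist_I_le_iff _ r hr.le]
      have him : (UpperHalfPlane.mk ⟨p, q⟩ hq).im = q := rfl
      have habs : ‖((UpperHalfPlane.mk ⟨p, q⟩ hq) : ℂ) - Complex.I‖ ^ 2
          = p ^ 2 + (q - 1) ^ 2 := by
        rw [Complex.sq_norm, Complex.normSq_apply]
        simp only [Complex.sub_re, Complex.sub_im, Complex.I_re, Complex.I_im, sub_zero,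
          UpperHalfPlane.coe_mk]
        show p * p + (q - 1) * (q - 1) = _
        ring
      rw [him, habs]
      have h2q : (0 : ℝ) < 2 * q := by linarith
      have : (p ^ 2 + (q - 1) ^ 2) / (2 * q) ≤ K - 1 :=
        (div_le_iff₀ h2q).2 (by nlinarith [hfin])
      linarith

lemma key_algebra (t x y : ℝ) (ht : 0 < t) (hx0 : -t < x) (hx : x ≤ 0) :
    (x ^ 2 + 1) * (y ^ 2 + 1) ≤ (1 + t ^ 2) * (x - y) ^ 2 ↔
      -((-x * t - 1) / (-x + t)) ≤ y ∨ y ≤ -((-x * t + 1) / (x + t)) := by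
  have h1 : (0 : ℝ) < -x + t := by linarith
  have h2 : (0 : ℝ) < x + t := by linarith
  have e1 : -((-x * t - 1) / (-x + t)) = (x * t + 1) / (-x + t) := by
    rw [← neg_div]; ring_nf
  have e2 : -((-x * t + 1) / (x + t)) = (x * t - 1) / (x + t) := by
    rw [← neg_div]; ring_nf
  have hx1 : (0 : ℝ) < x ^ 2 + 1 := by positivity
  rw [e1, e2, div_le_iff₀ h1, le_div_iff₀ h2]
  constructor
  · intro h
    by_cases hb : x * t + 1 ≤ y * (-x + t)
    · exact Or.inl hb
    · right; push_neg at hb; nlinarith [h, hb]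
  · rintro (h | h)
    · have hb' : 0 ≤ y * (-x + t) - (x * t + 1) := by linarith
      nlinarith [mul_nonneg (mul_nonneg hb' hb') h2.le,
        mul_nonneg hb' (mul_pos ht hx1).le]
    · have ha' : 0 ≤ (x * t - 1) - y * (x + t) := by linarith
      nlinarith [mul_nonneg (mul_nonneg ha' ha') h1.le,
        mul_nonneg ha' (mul_pos ht hx1).le]

/-- For every r > 0, every real x with −sinh r < x ≤ 0, and every real y ≠ x, the geodesic
γ(x,y) intersects the closed disc B̄_r(i) iff y ≥ −W_r(−x) or y ≤ −U_r(−x). -/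
theorem meets_iff_of_neg_sinh_lt (r : ℝ) (hr : 0 < r) (x : ℝ) (hx0 : -Real.sinh r < x)
    (hx : x ≤ 0) (y : ℝ) (hy : y ≠ x) :
    MeetsClosedDisc x y r ↔
      -((-x * Real.sinh r - 1) / (-x + Real.sinh r)) ≤ y ∨
        y ≤ -((-x * Real.sinh r + 1) / (x + Real.sinh r)) := by
  rw [meets_iff_quad r hr x y hy,
    show Real.cosh r ^ 2 = 1 + Real.sinh r ^ 2 by rw [Real.cosh_sq]; ring]
  exact key_algebra (Real.sinh r) x y (Real.sinh_pos_iff.2 hr) hx0 hx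
end
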